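/- If d is a real number with d ≥ 1, k ≥ 2 is an integer, and there exists f ≥ 1 such that 1/d² + (k-1)/f² ≤ (1/2)(1 + 1/f), then d ≥ √((16k-16)/(8k-7)). -/

import Mathlib

/-- If `d ≥ 1` is real, `k ≥ 2` an integer, and there exists `f ≥ 1` with
`1/d² + (k-1)/f² ≤ (1/2)(1 + 1/f)`, then `d ≥ √((16k-16)/(8k-7))`. -/
theorem stmt_2 (d : ℝ) (k : ℤ) (hd : 1 ≤ d) (hk : 2 ≤ k)
    (h : ∃ f : ℝ, 1 ≤ f ∧ 1 / d ^ 2 + ((k : ℝ) - 1) / f ^ 2 ≤ (1 / 2) * (1 + 1 / f)) :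
    d ≥ Real.sqrt ((16 * (k : ℝ) - 16) / (8 * (k : ℝ) - 7)) := by
  obtain ⟨f, hf, hle⟩ := h
  have hK : (2:ℝ) ≤ (k:ℝ) := by exact_mod_cast hk
  have hd0 : (0:ℝ) < d := lt_of_lt_of_le one_pos hd
  have hf0 : (0:ℝ) < f := lt_of_lt_of_le one_pos hf
  have h87 : (0:ℝ) < 8*(k:ℝ)-7 := by linarith
  have key : (16*(k:ℝ)-16)/(8*(k:ℝ)-7) ≤ d^2 := by
    rw [div_le_iff₀ h87]
    have hd2 : (0:ℝ) < d^2 := by positivity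
    have hf2 : (0:ℝ) < f^2 := by positivity
    have hle' : 2 * f^2 + 2 * d^2 * ((k:ℝ)-1) ≤ d^2 * f^2 + d^2 * f := by
      field_simp at hle
      nlinarith [hle]
    nlinarith [sq_nonneg ((f - 4*((k:ℝ)-1))*d), hle', mul_pos hd2 hf2]
  calc Real.sqrt ((16 * (k : ℝ) - 16) / (8 * (k : ℝ) - 7)) ≤ Real.sqrt (d^2) :=
        Real.sqrt_le_sqrt key
    _ = d := Real.sqrt_sq hd0.le
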